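/- arXiv:2211.02049 — 2 statements merged into one kernel-verified Lean document; each statement's English description precedes it below -/
import Mathlib

section
/- For complex numbers a, c with a and c not nonpositive integers, the limit as n → ∞ of n^{c-a} · (a)_n/(c)_n equals Γ(c)/Γ(a). -/
open Filter

/-- The Pochhammer symbol `(a)_n = a(a+1)⋯(a+n-1)`. -/
noncomputable def poch (a : ℂ) (n : ℕ) : ℂ := Polynomial.eval a (ascPochhammer ℂ n)

/-- `z` is not a nonpositive integer. -/
def NotNonposInt (z : ℂ) : Prop := ∀ m : ℕ, z ≠ -(m : ℂ)

lemma poch_succ (a : ℂ) (n : ℕ) : poch a (n + 1) = poch a n * (a + n) := by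
  simp [poch, ascPochhammer_succ_right, Polynomial.eval_mul]

lemma add_nat_ne_zero {a : ℂ} (ha : NotNonposInt a) (n : ℕ) : a + n ≠ 0 := by
  intro h
  exact ha n (by linear_combination h)

lemma poch_ne_zero {a : ℂ} (ha : NotNonposInt a) (n : ℕ) : poch a n ≠ 0 := by
  induction n with
  | zero => simp [poch]
  | succ n ih =>
    rw [poch_succ]
    exact mul_ne_zero ih (add_nat_ne_zero ha n)

lemma poch_eq_prod (a : ℂ) (n : ℕ) : poch a n = ∏ j ∈ Finset.range n, (a + j) := by
  induction n with
  | zero => simp [poch]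
  | succ n ih => rw [poch_succ, ih, Finset.prod_range_succ]

lemma nat_inv_tendsto : Tendsto (fun n : ℕ => ((n : ℂ))⁻¹) atTop (nhds 0) := by
  rw [tendsto_zero_iff_norm_tendsto_zero]
  simp only [norm_inv, Complex.norm_natCast]
  exact tendsto_inv_atTop_zero.comp tendsto_natCast_atTop_atTop

theorem poch_ratio_limit (a c : ℂ) (ha : NotNonposInt a) (hc : NotNonposInt c) :
    Tendsto (fun n : ℕ => (n : ℂ) ^ (c - a) * (poch a n / poch c n)) atTop
      (nhds (Complex.Gamma c / Complex.Gamma a)) := by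
  have hGa : Complex.Gamma a ≠ 0 := Complex.Gamma_ne_zero ha
  have h1 : Tendsto (fun n : ℕ => (c + n) / (a + n)) atTop (nhds 1) := by
    have h2 : Tendsto (fun n : ℕ => (c * (n : ℂ)⁻¹ + 1) / (a * (n : ℂ)⁻¹ + 1)) atTop
        (nhds 1) := by
      have := (((nat_inv_tendsto.const_mul c).add_const 1).div
        ((nat_inv_tendsto.const_mul a).add_const 1) (by norm_num))
      simpa [Pi.div_def] using this
    apply h2.congr'
    filter_upwards [eventually_ne_atTop 0] with n hn
    have hn' : (n : ℂ) ≠ 0 := Nat.cast_ne_zero.mpr hn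
    have hd : a * (n : ℂ)⁻¹ + 1 ≠ 0 := by
      intro h
      apply add_nat_ne_zero ha n
      field_simp at h
      linear_combination h
    rw [div_eq_div_iff hd (add_nat_ne_zero ha n)]
    field_simp
  have hmain : Tendsto (fun n : ℕ =>
      Complex.GammaSeq c n / Complex.GammaSeq a n * ((c + n) / (a + n))) atTop
      (nhds (Complex.Gamma c / Complex.Gamma a)) := by
    simpa using
      (((Complex.GammaSeq_tendsto_Gamma c).div (Complex.GammaSeq_tendsto_Gamma a) hGa).mul h1)
  apply hmain.congr'
  filter_upwards [eventually_ne_atTop 0] with n hn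
  have hn' : (n : ℂ) ≠ 0 := Nat.cast_ne_zero.mpr hn
  have key : ∀ s : ℂ, Complex.GammaSeq s n = (n : ℂ) ^ s * (n.factorial : ℂ) / (poch s n * (s + n)) := by
    intro s
    rw [Complex.GammaSeq, ← poch_eq_prod, poch_succ]
  rw [key, key, Complex.cpow_sub _ _ hn']
  have h1 := poch_ne_zero ha n
  have h2 := poch_ne_zero hc n
  have h3 := add_nat_ne_zero ha n
  have h4 := add_nat_ne_zero hc n
  have h5 : (n : ℂ) ^ a ≠ 0 := by
    intro h; exact hn' (Complex.cpow_eq_zero_iff _ _ |>.mp h).1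
  have h6 : (n : ℂ) ^ c ≠ 0 := by
    intro h; exact hn' (Complex.cpow_eq_zero_iff _ _ |>.mp h).1
  have h7 : (n.factorial : ℂ) ≠ 0 := Nat.cast_ne_zero.mpr n.factorial_ne_zero
  field_simp
end

section
/- For complex numbers a, c and natural number n, the contiguous relation c·(a)_n/(c)_n − a·(a+1)_n/(c+1)_n + (a−c)·(a)_n/(c+1)_n = 0 holds, provided c and c+1 are not equal to any of 0, −1, ..., −(n−1) (so denominators are nonzero). -/
lemma poch_ne_zero_s4 (c : ℂ) (n : ℕ) (h : ∀ j : ℕ, j < n → c ≠ -(j : ℂ)) :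
    poch c n ≠ 0 := by
  induction n with
  | zero => simp [poch]
  | succ m ih =>
    rw [poch, ascPochhammer_succ_eval]
    refine mul_ne_zero (ih fun j hj => h j (hj.trans m.lt_succ_self)) ?_
    intro hzero
    exact h m m.lt_succ_self (by linear_combination hzero)

lemma poch_succ_left (a : ℂ) (n : ℕ) : a * poch (a + 1) n = poch a n * (a + n) := by
  have h1 : poch a (n + 1) = a * poch (a + 1) n := by
    simp [poch, ascPochhammer_succ_left, Polynomial.eval_comp]
  have h2 : poch a (n + 1) = poch a n * (a + n) := by
    simp [poch, ascPochhammer_succ_eval]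
  rw [← h1, h2]

theorem contiguous_relation_coeff (a c : ℂ) (n : ℕ)
    (hc : ∀ j : ℕ, j < n → c ≠ -(j : ℂ)) (hc1 : ∀ j : ℕ, j < n → c + 1 ≠ -(j : ℂ)) :
    c * (poch a n / poch c n) - a * (poch (a + 1) n / poch (c + 1) n) +
      (a - c) * (poch a n / poch (c + 1) n) = 0 := by
  have hC := poch_ne_zero_s4 c n hc
  have hC1 := poch_ne_zero_s4 (c + 1) n hc1
  have h1 := poch_succ_left a n
  have h2 := poch_succ_left c n
  field_simp
  linear_combination poch a n * h2 - poch c n * h1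
end
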